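/- For every Jordan matrix J ∈ k^{n×n} there exists a permutation matrix P such that P^{-1}JP is a Weyr matrix; that is, the Weyr canonical form of a matrix is obtained from its Jordan canonical form by a simultaneous permutation of rows and columns. -/

import Mathlib

open Matrix

def IsWeyrMatrix {k : Type*} [Field k] [LinearOrder k] {n : ℕ}
    (W : Matrix (Fin n) (Fin n) k) : Prop :=
  ∃ (r : ℕ) (ev : Fin r → k) (K : Fin r → ℕ) (m : (i : Fin r) → Fin (K i) → ℕ),
    StrictMono ev ∧
    (∀ i, 0 < K i) ∧
    (∀ (i : Fin r) (a b : Fin (K i)), a ≤ b → m i b ≤ m i a) ∧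
    (∀ (i : Fin r) (j : Fin (K i)), 0 < m i j) ∧
    ∃ e : (Σ i : Fin r, Σ j : Fin (K i), Fin (m i j)) ≃ Fin n,
      (∀ x y : (Σ i : Fin r, Σ j : Fin (K i), Fin (m i j)), x.1 < y.1 → e x < e y) ∧
      (∀ (i : Fin r) (x y : Σ j : Fin (K i), Fin (m i j)), x.1 < y.1 →
        e ⟨i, x⟩ < e ⟨i, y⟩) ∧
      (∀ (i : Fin r) (j : Fin (K i)) (a b : Fin (m i j)), a < b →
        e ⟨i, j, a⟩ < e ⟨i, j, b⟩) ∧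
      (∀ (i i' : Fin r) (j : Fin (K i)) (j' : Fin (K i'))
          (a : Fin (m i j)) (b : Fin (m i' j')),
        W (e ⟨i, j, a⟩) (e ⟨i', j', b⟩) =
          if i = i' ∧ (j : ℕ) = (j' : ℕ) ∧ (a : ℕ) = (b : ℕ) then ev i
          else if i = i' ∧ (j' : ℕ) = (j : ℕ) + 1 ∧ (a : ℕ) = (b : ℕ) then 1
          else 0)

/-- `J ∈ k^{n×n}` is a *Jordan matrix*: a direct sum of Jordan blocks `J_{s_i}(λ_i)`
occupying consecutive strips. -/
def IsJordanMatrix {k : Type*} [Field k] {n : ℕ}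
    (J : Matrix (Fin n) (Fin n) k) : Prop :=
  ∃ (r : ℕ) (s : Fin r → ℕ) (lam : Fin r → k),
    (∀ i, 0 < s i) ∧
    ∃ e : (Σ i : Fin r, Fin (s i)) ≃ Fin n,
      (∀ x y : (Σ i : Fin r, Fin (s i)), x.1 < y.1 → e x < e y) ∧
      (∀ (i : Fin r) (a b : Fin (s i)), a < b → e ⟨i, a⟩ < e ⟨i, b⟩) ∧
      (∀ (i i' : Fin r) (a : Fin (s i)) (b : Fin (s i')),
        J (e ⟨i, a⟩) (e ⟨i', b⟩) =
          if i = i' ∧ (a : ℕ) = (b : ℕ) then lam i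
          else if i = i' ∧ (b : ℕ) = (a : ℕ) + 1 then 1
          else 0)

/-- If `A` is an initial segment of `B` (every element of `B \ A` exceeds every element
of `A`), then the increasing enumeration of `B` agrees with that of `A` on the first
`A.card` indices. -/
lemma aux_initial_seg {A B : Finset ℕ} (hAB : A ⊆ B)
    (hseg : ∀ x ∈ A, ∀ y ∈ B, y ∉ A → x < y)
    {a b : ℕ} (hA : A.card = a) (hB : B.card = b)
    (hab : a ≤ b) (i : Fin a) :
    B.orderEmbOfFin hB ⟨i.1, lt_of_lt_of_le i.2 hab⟩ = A.orderEmbOfFin hA i := by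
  set g : Fin a → ℕ := fun j => B.orderEmbOfFin hB ⟨j.1, lt_of_lt_of_le j.2 hab⟩ with hg
  have hgmono : StrictMono g := by
    intro x y hxy
    exact (B.orderEmbOfFin hB).strictMono (Fin.mk_lt_mk.mpr hxy)
  have hmem : ∀ j : Fin a, g j ∈ A := by
    intro j
    by_contra hnot
    have hBj : g j ∈ B := Finset.orderEmbOfFin_mem B hB _
    set Im : Finset ℕ := (Finset.Iio j).image g with hIm
    have hcard : Im.card < A.card := by
      calc Im.card ≤ (Finset.Iio j).card := Finset.card_image_le
        _ = j.1 := Fin.card_Iio j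
        _ < a := j.2
        _ = A.card := hA.symm
    have hnsub : ¬ A ⊆ Im := fun hsub => absurd (Finset.card_le_card hsub) (not_le.mpr hcard)
    obtain ⟨x, hxA, hxIm⟩ := Finset.not_subset.mp hnsub
    have hxB : x ∈ B := hAB hxA
    have hxlt : x < g j := hseg x hxA _ hBj hnot
    have hxr : x ∈ Set.range (B.orderEmbOfFin hB) := by
      rw [Finset.range_orderEmbOfFin]; exact_mod_cast hxB
    obtain ⟨l, hl⟩ := hxr
    have hlj : l.1 < j.1 := by
      have h2 : (B.orderEmbOfFin hB) l < (B.orderEmbOfFin hB) ⟨j.1, lt_of_lt_of_le j.2 hab⟩ := by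
        rw [hl]; exact hxlt
      exact (B.orderEmbOfFin hB).lt_iff_lt.mp h2
    apply hxIm
    refine Finset.mem_image.mpr ⟨⟨l.1, lt_trans hlj j.2⟩, Finset.mem_Iio.mpr ?_, ?_⟩
    · exact hlj
    · rw [hg, ← hl]
  have := Finset.orderEmbOfFin_unique hA hmem hgmono
  exact congrFun this i

/-- For every Jordan matrix `J` there is a permutation matrix `P` such that
`P⁻¹ J P` is a Weyr matrix: the Weyr form is obtained from the Jordan form by a
simultaneous permutation of rows and columns. -/
theorem jordan_to_weyr_by_permutation {k : Type*} [Field k] [IsAlgClosed k]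
    [LinearOrder k] {n : ℕ} (J : Matrix (Fin n) (Fin n) k)
    (hJ : IsJordanMatrix J) :
    ∃ (σ : Equiv.Perm (Fin n)) (P : Matrix (Fin n) (Fin n) k),
      (∀ i j, P i j = if σ i = j then 1 else 0) ∧
      IsWeyrMatrix (P⁻¹ * J * P) := by
  obtain ⟨r, s, lam, hs, e, he1, he2, he3⟩ := hJ
  by_cases hn : n = 0
  · subst hn
    refine ⟨Equiv.refl _, 1, ?_, ?_⟩
    · intro i; exact i.elim0
    · refine ⟨0, Fin.elim0, fun _ => 1, fun _ _ => 1, ?_, ?_, ?_, ?_, ?_⟩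
      · intro a; exact a.elim0
      · intro i; exact i.elim0
      · intro i; exact i.elim0
      · intro i; exact i.elim0
      · haveI hemp : IsEmpty ((i : Fin 0) × (j : Fin 1) × Fin 1) :=
          ⟨fun x => x.1.elim0⟩
        refine ⟨Equiv.equivOfIsEmpty _ _, ?_, ?_, ?_, ?_⟩
        · intro x; exact x.1.elim0
        · intro i; exact i.elim0
        · intro i; exact i.elim0
        · intro i; exact i.elim0
  -- Main case
  have hn0 : 0 < n := Nat.pos_of_ne_zero hn
  have hr : 0 < r := by
    rcases Nat.eq_zero_or_pos r with h0 | h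
    · subst h0; exact (e.symm ⟨0, hn0⟩).1.elim0
    · exact h
  have hcardJ : Fintype.card (Σ i : Fin r, Fin (s i)) = n := by
    rw [Fintype.card_congr e, Fintype.card_fin]
  have hsum : ∑ i : Fin r, s i = n := by
    simpa [Fintype.card_sigma] using hcardJ
  have hsn : ∀ b, s b ≤ n :=
    fun b => hsum ▸ Finset.single_le_sum (f := s) (fun i _ => Nat.zero_le _) (Finset.mem_univ b)
  -- codes for blocks: smaller code ↔ bigger size (ties broken by index)
  set c : Fin r → ℕ := fun b => (n - s b) * r + b.1 with hc
  have hdec : ∀ b, (c b) % r = b.1 := by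
    intro b
    show ((n - s b) * r + b.1) % r = b.1
    rw [Nat.mul_comm, Nat.mul_add_mod]
    exact Nat.mod_eq_of_lt b.2
  have hcinj : Function.Injective c := by
    intro b b' h
    have : b.1 = b'.1 := by rw [← hdec b, ← hdec b', h]
    exact Fin.ext this
  have hclt : ∀ b b', s b' < s b → c b < c b' := by
    intro b b' hss
    have hb1 : b.1 < r := b.2
    have h1 : n - s b + 1 ≤ n - s b' := by
      have := hsn b; omega
    calc c b = (n - s b) * r + b.1 := rfl
      _ < (n - s b) * r + r := by omega
      _ = (n - s b + 1) * r := by ring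
      _ ≤ (n - s b') * r := Nat.mul_le_mul_right r h1
      _ ≤ c b' := Nat.le_add_right _ _
  -- eigenvalues
  set S : Finset k := Finset.image lam Finset.univ with hS
  set R : ℕ := S.card with hR
  set evIso := S.orderIsoOfFin rfl with hevIso
  set ev : Fin R → k := fun i => (evIso i : k) with hev
  have hevmono : StrictMono ev := by
    intro a b h
    exact_mod_cast evIso.strictMono h
  have hevinj : Function.Injective ev := hevmono.injective
  have hevmem : ∀ i, ev i ∈ S := fun i => (evIso i).2
  have hevsurj : ∀ x ∈ S, ∃ i, ev i = x := by
    intro x hx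
    exact ⟨evIso.symm ⟨x, hx⟩, by simp [hev]⟩
  -- maximal block size for each eigenvalue
  set K : Fin R → ℕ := fun i => Finset.sup (Finset.univ.filter fun b => lam b = ev i) s with hK
  have hKle : ∀ i b, lam b = ev i → s b ≤ K i := by
    intro i b hb
    exact Finset.le_sup (by simp [hb])
  have hKex : ∀ i : Fin R, ∃ b, lam b = ev i ∧ s b = K i := by
    intro i
    obtain ⟨b0, -, hb0⟩ := Finset.mem_image.mp (hevmem i)
    obtain ⟨b, hbmem, hbe⟩ :=
      Finset.exists_mem_eq_sup (Finset.univ.filter fun b => lam b = ev i)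
        ⟨b0, by simp [hb0]⟩ s
    exact ⟨b, (Finset.mem_filter.mp hbmem).2, hbe.symm⟩
  have hKpos : ∀ i, 0 < K i := by
    intro i
    obtain ⟨b, hb, hbe⟩ := hKex i
    exact hbe ▸ hs b
  -- finsets of codes of blocks with eigenvalue `ev i` and size `> j`
  set B : Fin R → ℕ → Finset ℕ :=
    fun i j => (Finset.univ.filter fun b => lam b = ev i ∧ j < s b).image c with hB
  set m' : Fin R → ℕ → ℕ := fun i j => (B i j).card with hm'
  have hBmono : ∀ (i : Fin R) (j j' : ℕ), j ≤ j' → B i j' ⊆ B i j := by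
    intro i j j' hjj
    apply Finset.image_subset_image
    intro b hb
    simp only [Finset.mem_filter] at hb ⊢
    exact ⟨hb.1, hb.2.1, lt_of_le_of_lt hjj hb.2.2⟩
  have hm'mono : ∀ (i : Fin R) (j j' : ℕ), j ≤ j' → m' i j' ≤ m' i j :=
    fun i j j' h => Finset.card_le_card (hBmono i j j' h)
  have hm'pos : ∀ (i : Fin R) (j : ℕ), j < K i → 0 < m' i j := by
    intro i j hj
    obtain ⟨b, hb, hbe⟩ := hKex i
    apply Finset.card_pos.mpr
    exact ⟨c b, Finset.mem_image_of_mem c (by simp [hb, hbe ▸ hj])⟩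
  set blkE : (i : Fin R) → (j : ℕ) → Fin (m' i j) → ℕ :=
    fun i j => (B i j).orderEmbOfFin rfl with hblkE
  have hblkex : ∀ (i : Fin R) (j : ℕ) (a : Fin (m' i j)),
      ∃ b : Fin r, (lam b = ev i ∧ j < s b) ∧ c b = blkE i j a := by
    intro i j a
    have hmem : blkE i j a ∈ B i j := Finset.orderEmbOfFin_mem (B i j) rfl a
    obtain ⟨b, hbmem, hbc⟩ := Finset.mem_image.mp hmem
    exact ⟨b, (Finset.mem_filter.mp hbmem).2, hbc⟩
  choose blk hblkP hblkC using hblkex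
  have hblk1 : ∀ i j a, lam (blk i j a) = ev i := fun i j a => (hblkP i j a).1
  have hblk2 : ∀ i j a, j < s (blk i j a) := fun i j a => (hblkP i j a).2
  have hblkinj : ∀ i j, Function.Injective (blk i j) := by
    intro i j a a' h
    have h2 : blkE i j a = blkE i j a' := by rw [← hblkC, ← hblkC, h]
    exact ((B i j).orderEmbOfFin rfl).injective h2
  have hblksurj : ∀ (i : Fin R) (j : ℕ) (b : Fin r),
      lam b = ev i → j < s b → ∃ a, blk i j a = b := by
    intro i j b hb hj
    have hcb : c b ∈ B i j := Finset.mem_image_of_mem c (by simp [hb, hj])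
    have hrange : c b ∈ Set.range ((B i j).orderEmbOfFin rfl) := by
      rw [Finset.range_orderEmbOfFin]; exact_mod_cast hcb
    obtain ⟨a, ha⟩ := hrange
    refine ⟨a, hcinj ?_⟩
    rw [hblkC]; exact ha
  have hprefix : ∀ (i : Fin R) (j : ℕ) (a : Fin (m' i (j + 1))),
      blk i (j + 1) a = blk i j ⟨a.1, lt_of_lt_of_le a.2 (hm'mono i j (j + 1) (Nat.le_succ j))⟩ := by
    intro i j a
    apply hcinj
    rw [hblkC, hblkC]
    have hseg : ∀ x ∈ B i (j + 1), ∀ y ∈ B i j, y ∉ B i (j + 1) → x < y := by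
      intro x hx y hy hyn
      obtain ⟨b', hb'mem, hb'c⟩ := Finset.mem_image.mp hx
      obtain ⟨b, hbmem, hbc⟩ := Finset.mem_image.mp hy
      simp only [Finset.mem_filter] at hb'mem hbmem
      have hsb : ¬ (j + 1 < s b) := by
        intro hcon
        exact hyn (hbc ▸ Finset.mem_image_of_mem c (by simp [hbmem.2.1, hcon]))
      have hlt : s b < s b' := by
        have := hbmem.2.2; have := hb'mem.2.2; omega
      rw [← hb'c, ← hbc]
      exact hclt b' b hlt
    exact (aux_initial_seg (hBmono i j (j + 1) (Nat.le_succ j)) hseg rfl rfl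
      (hm'mono i j (j + 1) (Nat.le_succ j)) a).symm
  have hprefix' : ∀ (i : Fin R) (j j' : ℕ) (hjj : j' = j + 1) (b : Fin (m' i j'))
      (hb : b.1 < m' i j), blk i j' b = blk i j ⟨b.1, hb⟩ := by
    intro i j j' hjj b hb
    subst hjj
    exact hprefix i j b
  -- the index correspondence
  set T := (Σ i : Fin R, Σ j : Fin (K i), Fin (m' i j.1)) with hT
  set F : T → (Σ b : Fin r, Fin (s b)) :=
    fun x => ⟨blk x.1 x.2.1.1 x.2.2, ⟨x.2.1.1, hblk2 _ _ _⟩⟩ with hF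
  have hFinj : Function.Injective F := by
    rintro ⟨i, j, a⟩ ⟨i', j', a'⟩ h
    have hb : blk i j.1 a = blk i' j'.1 a' := congrArg Sigma.fst h
    have hjj : (j.1 : ℕ) = j'.1 := congrArg (fun y : (Σ b : Fin r, Fin (s b)) => (y.2 : ℕ)) h
    have hi : i = i' := hevinj (by rw [← hblk1 i j.1 a, ← hblk1 i' j'.1 a', hb])
    subst hi
    have hj : j = j' := Fin.ext hjj
    subst hj
    have ha : a = a' := hblkinj i j.1 hb
    subst ha
    rfl
  have hFsurj : Function.Surjective F := by
    rintro ⟨b, pv, hp⟩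
    have hbS : lam b ∈ S := Finset.mem_image_of_mem lam (Finset.mem_univ b)
    obtain ⟨i, hi⟩ := hevsurj (lam b) hbS
    have hjK : pv < K i := lt_of_lt_of_le hp (hKle i b hi.symm)
    obtain ⟨a, ha⟩ := hblksurj i pv b hi.symm hp
    refine ⟨⟨i, ⟨pv, hjK⟩, a⟩, ?_⟩
    subst ha
    rfl
  set f : T ≃ (Σ b : Fin r, Fin (s b)) := Equiv.ofBijective F ⟨hFinj, hFsurj⟩ with hf
  have hcardT : Fintype.card T = n := by
    rw [Fintype.card_congr (f.trans e), Fintype.card_fin]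
  -- lexicographic enumeration of T
  set gT : T → ℕ ×ₗ (ℕ ×ₗ ℕ) := fun x => toLex (x.1.1, toLex (x.2.1.1, x.2.2.1)) with hgT
  have hgTinj : Function.Injective gT := by
    rintro ⟨i, j, a⟩ ⟨i', j', a'⟩ h
    simp only [hgT, toLex_inj, Prod.mk.injEq] at h
    obtain ⟨h1, h2, h3⟩ := h
    have hi : i = i' := Fin.ext h1
    subst hi
    have hj : j = j' := Fin.ext h2
    subst hj
    have ha : a = a' := Fin.ext h3
    subst ha
    rfl
  set U : Finset (ℕ ×ₗ (ℕ ×ₗ ℕ)) := Finset.image gT Finset.univ with hU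
  have hUcard : U.card = n := by
    rw [hU, Finset.card_image_of_injective _ hgTinj, Finset.card_univ, hcardT]
  have hgmem : ∀ x : T, gT x ∈ U := fun x => Finset.mem_image_of_mem gT (Finset.mem_univ x)
  set gE : T → {u // u ∈ U} := fun x => ⟨gT x, hgmem x⟩ with hgE
  have hgEbij : Function.Bijective gE := by
    constructor
    · intro x y h
      exact hgTinj (congrArg Subtype.val h)
    · rintro ⟨u, hu⟩
      obtain ⟨x, -, hx⟩ := Finset.mem_image.mp hu
      exact ⟨x, Subtype.ext hx⟩
  set UIso := U.orderIsoOfFin hUcard with hUIso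
  set e' : T ≃ Fin n := (Equiv.ofBijective gE hgEbij).trans UIso.toEquiv.symm with he'
  have he'lt : ∀ x y : T, gT x < gT y → e' x < e' y := by
    intro x y h
    have h2 : gE x < gE y := Subtype.mk_lt_mk.mpr h
    exact UIso.symm.strictMono h2
  set σ : Equiv.Perm (Fin n) := (e'.symm.trans (f.trans e)).symm with hσ
  have hσsymm : ∀ x : T, σ.symm (e' x) = e (f x) := by
    intro x; simp [hσ]
  set Pm : Matrix (Fin n) (Fin n) k := σ.toPEquiv.toMatrix with hPm
  refine ⟨σ, Pm, ?_, ?_⟩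
  · intro i j
    simp [hPm, PEquiv.toMatrix_apply, Equiv.toPEquiv_apply, Option.mem_def, eq_comm]
  have hPinv : Pm⁻¹ = σ.symm.toPEquiv.toMatrix := by
    apply Matrix.inv_eq_right_inv
    rw [hPm, PEquiv.toMatrix_toPEquiv_mul]
    ext i j
    simp [Matrix.submatrix_apply, PEquiv.toMatrix_apply, Equiv.toPEquiv_apply, Matrix.one_apply,
      eq_comm]
  have hW : ∀ x y : Fin n, (Pm⁻¹ * J * Pm) x y = J (σ.symm x) (σ.symm y) := by
    intro x y
    rw [hPinv, hPm, PEquiv.toMatrix_toPEquiv_mul, PEquiv.mul_toMatrix_toPEquiv]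
    simp [Matrix.submatrix_apply]
  refine ⟨R, ev, K, fun i j => m' i j.1, hevmono, hKpos, ?_, ?_, ?_⟩
  · intro i a b hab
    exact hm'mono i a.1 b.1 hab
  · intro i j
    exact hm'pos i j.1 j.2
  refine ⟨e', ?_, ?_, ?_, ?_⟩
  · intro x y h
    apply he'lt
    exact Prod.Lex.lt_iff.mpr (Or.inl h)
  · intro i x y h
    apply he'lt
    refine Prod.Lex.lt_iff.mpr (Or.inr ⟨rfl, ?_⟩)
    exact Prod.Lex.lt_iff.mpr (Or.inl h)
  · intro i j a b h
    apply he'lt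
    refine Prod.Lex.lt_iff.mpr (Or.inr ⟨rfl, ?_⟩)
    exact Prod.Lex.lt_iff.mpr (Or.inr ⟨rfl, h⟩)
  · intro i i' j j' a b
    rw [hW, hσsymm, hσsymm]
    have hfa : f ⟨i, j, a⟩ = ⟨blk i j.1 a, ⟨j.1, hblk2 _ _ _⟩⟩ := rfl
    have hfb : f ⟨i', j', b⟩ = ⟨blk i' j'.1 b, ⟨j'.1, hblk2 _ _ _⟩⟩ := rfl
    rw [hfa, hfb, he3]
    by_cases h1 : i = i' ∧ (j : ℕ) = (j' : ℕ) ∧ (a : ℕ) = (b : ℕ)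
    · obtain ⟨hi, hjj, hab⟩ := h1
      subst hi
      have hj : j = j' := Fin.ext hjj
      subst hj
      have hab' : a = b := Fin.ext hab
      subst hab'
      have hcJ : blk i j.1 a = blk i j.1 a ∧
          ((⟨j.1, hblk2 i j.1 a⟩ : Fin (s (blk i j.1 a))) : ℕ)
            = ((⟨j.1, hblk2 i j.1 a⟩ : Fin (s (blk i j.1 a))) : ℕ) := ⟨rfl, rfl⟩
      have hcW : i = i ∧ (j : ℕ) = (j : ℕ) ∧ (a : ℕ) = (a : ℕ) := ⟨rfl, rfl, rfl⟩
      rw [if_pos hcJ, if_pos hcW]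
      exact hblk1 _ _ _
    · have hd1 : ¬ (blk i j.1 a = blk i' j'.1 b ∧
          ((⟨j.1, hblk2 i j.1 a⟩ : Fin (s (blk i j.1 a))) : ℕ)
            = ((⟨j'.1, hblk2 i' j'.1 b⟩ : Fin (s (blk i' j'.1 b))) : ℕ)) := by
        rintro ⟨hbe, hje⟩
        apply h1
        have hi : i = i' := hevinj (by rw [← hblk1 i j.1 a, ← hblk1 i' j'.1 b, hbe])
        subst hi
        have hje' : (j : ℕ) = (j' : ℕ) := hje
        have hj : j = j' := Fin.ext hje'
        subst hj
        exact ⟨rfl, rfl, congrArg Fin.val (hblkinj i j.1 hbe)⟩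
      rw [if_neg hd1, if_neg h1]
      by_cases h2 : i = i' ∧ (j' : ℕ) = (j : ℕ) + 1 ∧ (a : ℕ) = (b : ℕ)
      · obtain ⟨hi, hj1, hab⟩ := h2
        subst hi
        have hle : m' i j'.1 ≤ m' i j.1 := by
          rw [hj1]; exact hm'mono i j.1 (j.1 + 1) (Nat.le_succ _)
        have hbb : b.1 < m' i j.1 := lt_of_lt_of_le b.2 hle
        have hpre := hprefix' i j.1 j'.1 hj1 b hbb
        have hba : (⟨b.1, hbb⟩ : Fin (m' i j.1)) = a := Fin.ext hab.symm
        rw [hba] at hpre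
        have hcJ2 : blk i j.1 a = blk i j'.1 b ∧
            ((⟨j'.1, hblk2 i j'.1 b⟩ : Fin (s (blk i j'.1 b))) : ℕ)
              = ((⟨j.1, hblk2 i j.1 a⟩ : Fin (s (blk i j.1 a))) : ℕ) + 1 := ⟨hpre.symm, hj1⟩
        have hcW2 : i = i ∧ (j' : ℕ) = (j : ℕ) + 1 ∧ (a : ℕ) = (b : ℕ) := ⟨rfl, hj1, hab⟩
        rw [if_pos hcJ2, if_pos hcW2]
      · have hd2 : ¬ (blk i j.1 a = blk i' j'.1 b ∧
            ((⟨j'.1, hblk2 i' j'.1 b⟩ : Fin (s (blk i' j'.1 b))) : ℕ)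
              = ((⟨j.1, hblk2 i j.1 a⟩ : Fin (s (blk i j.1 a))) : ℕ) + 1) := by
          rintro ⟨hbe, hje⟩
          apply h2
          have hi : i = i' := hevinj (by rw [← hblk1 i j.1 a, ← hblk1 i' j'.1 b, hbe])
          subst hi
          have hje' : (j' : ℕ) = (j : ℕ) + 1 := hje
          have hle : m' i j'.1 ≤ m' i j.1 := by
            rw [hje']; exact hm'mono i j.1 (j.1 + 1) (Nat.le_succ _)
          have hbb : b.1 < m' i j.1 := lt_of_lt_of_le b.2 hle
          have hpre := hprefix' i j.1 j'.1 hje' b hbb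
          rw [hpre] at hbe
          exact ⟨rfl, hje', congrArg Fin.val (hblkinj i j.1 hbe)⟩
        rw [if_neg hd2, if_neg h2]
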